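/- Let p be a prime and n a natural number with gcd(n, p) = 1. Then the map ψ_n(x) = x^n is an isometry on the sphere S_{p^{-l}}(1) = {x ∈ Q_p : |x - 1|_p = p^{-l}} for every l ≥ 1: for all x, y in this sphere, |x^n - y^n|_p = |x - y|_p. -/

import Mathlib

private lemma padic_sum_norm_le {p : ℕ} [Fact p.Prime] {r : ℝ} (hr : 0 ≤ r)
    {ι : Type*} (s : Finset ι) (f : ι → ℚ_[p]) (h : ∀ i ∈ s, ‖f i‖ ≤ r) :
    ‖∑ i ∈ s, f i‖ ≤ r := by
  classical
  induction s using Finset.induction_on with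
  | empty => simpa using hr
  | @insert a s hni ih =>
    rw [Finset.sum_insert hni]
    refine (Padic.nonarchimedean _ _).trans (max_le (h a (by simp))
      (ih fun i hi => h i (Finset.mem_insert_of_mem hi)))

theorem stmt_3 (p : ℕ) [Fact p.Prime] (n : ℕ) (hn : n.Coprime p)
    (l : ℕ) (hl : 1 ≤ l) (x y : ℚ_[p])
    (hx : ‖x - 1‖ = (p : ℝ) ^ (-(l : ℤ))) (hy : ‖y - 1‖ = (p : ℝ) ^ (-(l : ℤ))) :
    ‖x ^ n - y ^ n‖ = ‖x - y‖ := by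
  have hp1 : (1 : ℝ) < p := by exact_mod_cast (Fact.out : p.Prime).one_lt
  have hr0 : (0:ℝ) < (p : ℝ) ^ (-(l : ℤ)) := by positivity
  set r : ℝ := (p : ℝ) ^ (-(l : ℤ)) with hrdef
  have hr1 : r < 1 := by
    refine zpow_lt_one_of_neg₀ hp1 ?_
    simp only [Left.neg_neg_iff]
    exact_mod_cast hl
  -- ‖x‖ = 1 and ‖y‖ = 1
  have hone : ∀ z : ℚ_[p], ‖z - 1‖ = r → ‖z‖ = 1 := by
    intro z hz
    have : z = (z - 1) + 1 := by ring
    rw [this, Padic.add_eq_max_of_ne (by rw [hz, norm_one]; exact hr1.ne), hz, norm_one,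
      max_eq_right hr1.le]
  have hxn : ‖x‖ = 1 := hone x hx
  have hyn : ‖y‖ = 1 := hone y hy
  -- powers stay close to 1
  have key : ∀ (a b : ℕ), ‖x ^ a * y ^ b - 1‖ ≤ r := by
    have hpow : ∀ (z : ℚ_[p]), ‖z‖ = 1 → ‖z - 1‖ = r → ∀ a : ℕ, ‖z ^ a - 1‖ ≤ r := by
      intro z hz1 hzr a
      induction a with
      | zero => simpa using hr0.le
      | succ a ih =>
        have : z ^ (a+1) - 1 = z ^ a * (z - 1) + (z ^ a - 1) := by ring
        rw [this]
        refine (Padic.nonarchimedean _ _).trans (max_le ?_ ih)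
        rw [norm_mul, norm_pow, hz1, one_pow, one_mul, hzr]
    intro a b
    have : x ^ a * y ^ b - 1 = x ^ a * (y ^ b - 1) + (x ^ a - 1) := by ring
    rw [this]
    refine (Padic.nonarchimedean _ _).trans (max_le ?_ (hpow x hxn hx a))
    rw [norm_mul, norm_pow, hxn, one_pow, one_mul]
    exact hpow y hyn hy b
  -- the geometric sum has norm 1
  set S : ℚ_[p] := ∑ i ∈ Finset.range n, x ^ i * y ^ (n - 1 - i) with hS
  have hnnorm : ‖(n : ℚ_[p])‖ = 1 := by
    have hle : ‖(n : ℚ_[p])‖ ≤ 1 := by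
      have h' := Padic.norm_int_le_one (p := p) (n : ℤ)
      rwa [Int.cast_natCast] at h'
    have hnd : ¬ ((p:ℤ) ∣ (n:ℤ)) := by
      rw [Int.natCast_dvd_natCast]
      intro hd
      have h1 : p ∣ Nat.gcd n p := Nat.dvd_gcd hd dvd_rfl
      rw [hn] at h1
      exact (Fact.out : p.Prime).one_lt.ne' (Nat.dvd_one.mp h1)
    have : ¬ ‖((n:ℤ) : ℚ_[p])‖ < 1 := fun h => hnd ((Padic.norm_intCast_lt_one_iff (k := n)).mp h)
    push_neg at this
    exact le_antisymm hle (by simpa using this)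
  have hSsub : ‖S - (n : ℚ_[p])‖ ≤ r := by
    have : S - (n : ℚ_[p]) = ∑ i ∈ Finset.range n, (x ^ i * y ^ (n - 1 - i) - 1) := by
      rw [Finset.sum_sub_distrib]
      simp [hS]
    rw [this]
    exact padic_sum_norm_le hr0.le _ _ fun i _ => key i (n - 1 - i)
  have hSnorm : ‖S‖ = 1 := by
    have : S = (n : ℚ_[p]) + (S - (n : ℚ_[p])) := by ring
    rw [this, Padic.add_eq_max_of_ne (by rw [hnnorm]; exact fun h => (hSsub.trans_lt hr1).ne h.symm),
      hnnorm, max_eq_left ((hSsub.trans hr1.le))]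
  calc ‖x ^ n - y ^ n‖ = ‖S * (x - y)‖ := by rw [geom_sum₂_mul]
    _ = ‖S‖ * ‖x - y‖ := norm_mul _ _
    _ = ‖x - y‖ := by rw [hSnorm, one_mul]
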